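/- A rational number a is a square in ℚ if and only if a is a square in ℚ_p for every prime p and a is a square in ℝ. In other words, ℚ² = ℚ ∩ (ℝ² ∩ ⋂_p ℚ_p²). -/

import Mathlib

lemma nat_sq_of_even_factorization (n : ℕ) (hn : n ≠ 0)
    (h : ∀ p, Even (n.factorization p)) : ∃ m : ℕ, n = m ^ 2 := by
  refine ⟨n.factorization.prod fun p k => p ^ (k / 2), ?_⟩
  conv_lhs => rw [← Nat.factorization_prod_pow_eq_self hn]
  rw [Finsupp.prod, Finsupp.prod, ← Finset.prod_pow]
  refine Finset.prod_congr rfl fun p hp => ?_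
  rw [← pow_mul]
  congr 1
  obtain ⟨k, hk⟩ := h p
  omega

theorem rat_square_local_global (a : ℚ) :
    (∃ b : ℚ, a = b ^ 2) ↔
      (∃ r : ℝ, (a : ℝ) = r ^ 2) ∧
        ∀ (p : ℕ) (_ : Fact p.Prime), ∃ c : ℚ_[p], (a : ℚ_[p]) = c ^ 2 := by
  constructor
  · rintro ⟨b, rfl⟩
    exact ⟨⟨(b : ℝ), by push_cast; ring⟩, fun p _ => ⟨(b : ℚ_[p]), by push_cast; ring⟩⟩
  · rintro ⟨⟨r, hr⟩, hp⟩
    rcases eq_or_ne a 0 with rfl | ha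
    · exact ⟨0, by norm_num⟩
    have ha0 : 0 < a := by
      have : (0 : ℝ) ≤ (a : ℝ) := hr ▸ sq_nonneg r
      have h2 : (0 : ℚ) ≤ a := by exact_mod_cast this
      exact lt_of_le_of_ne h2 (Ne.symm ha)
    have hnum : 0 < a.num := Rat.num_pos.mpr ha0
    set n : ℕ := a.num.toNat * a.den with hn
    have hn0 : n ≠ 0 := by
      rw [hn]; exact Nat.mul_ne_zero (by omega) a.den_nz
    have heven : ∀ p, Even (n.factorization p) := by
      intro p
      by_cases hpp : p.Prime
      · haveI : Fact p.Prime := ⟨hpp⟩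
        obtain ⟨c, hc⟩ := hp p ⟨hpp⟩
        have hc0 : c ≠ 0 := by
          intro h; rw [h] at hc; simp at hc; exact ha (by exact_mod_cast hc)
        have hval : Even (padicValRat p a) := by
          have := Padic.valuation_ratCast (p := p) a
          rw [hc, pow_two, Padic.valuation_mul hc0 hc0] at this
          exact ⟨c.valuation, this.symm⟩
        have hrat : padicValRat p a = padicValInt p a.num - padicValNat p a.den := rfl
        have hint : padicValInt p a.num = padicValNat p a.num.toNat := by
          unfold padicValInt
          congr 1
          omega
        rw [Nat.factorization_def _ hpp, hn,
          padicValNat.mul (by omega) a.den_nz]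
        rw [hrat, hint] at hval
        rw [← Int.even_coe_nat, Nat.cast_add]
        exact (Int.even_add).2 ((Int.even_sub).1 hval)
      · rw [Nat.factorization_eq_zero_of_not_prime _ hpp]
        exact Even.zero
    obtain ⟨m, hm⟩ := nat_sq_of_even_factorization n hn0 heven
    refine ⟨(m : ℚ) / (a.den : ℚ), ?_⟩
    have hden : (a.den : ℚ) ≠ 0 := by exact_mod_cast a.den_nz
    rw [div_pow, eq_div_iff (by positivity)]
    have hmn : ((m : ℚ))^2 = (n : ℚ) := by exact_mod_cast congrArg (Nat.cast : ℕ → ℚ) hm.symm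
    have htn : ((a.num.toNat : ℤ)) = a.num := Int.toNat_of_nonneg hnum.le
    rw [hmn, hn]
    push_cast
    rw [show ((a.num.toNat : ℚ)) = (a.num : ℚ) by exact_mod_cast htn]
    rw [pow_two, ← mul_assoc, Rat.mul_den_eq_num]
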